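/- The constant 2+√2 is optimal in the tetrahedral inequality: for every k < 2+√2 there exists a tetrahedron with edge lengths a₁,…,a₆ (faces (a₁,a₂,a₃), (a₃,a₄,a₅), (a₁,a₄,a₆), (a₂,a₅,a₆)) such that the sum over the four faces of [√(x²+y²)+√(y²+z²)+√(z²+x²)] exceeds k·(a₁+⋯+a₆). -/

import Mathlib

/-- Sum over one triangular face of the square-root expression. -/
noncomputable def faceSum (x y z : ℝ) : ℝ :=
  Real.sqrt (x ^ 2 + y ^ 2) + Real.sqrt (y ^ 2 + z ^ 2) + Real.sqrt (z ^ 2 + x ^ 2)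

private noncomputable def pt3 (a b c : ℝ) : EuclideanSpace ℝ (Fin 3) :=
  (WithLp.equiv 2 _).symm ![a, b, c]

private lemma dist_pt3 (a b c d e f : ℝ) :
    dist (pt3 a b c) (pt3 d e f) = Real.sqrt ((a - d) ^ 2 + (b - e) ^ 2 + (c - f) ^ 2) := by
  rw [EuclideanSpace.dist_eq]
  simp [pt3, Fin.sum_univ_three, Real.dist_eq, sq_abs]

private lemma le_sqrt_of_sq_le (c x : ℝ) (hc : 0 ≤ c) (h : c ^ 2 ≤ x) : c ≤ Real.sqrt x := by
  rw [← Real.sqrt_sq hc]; exact Real.sqrt_le_sqrt h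

private lemma sqrt_le_of_le_sq (x c : ℝ) (hc : 0 ≤ c) (h : x ≤ c ^ 2) : Real.sqrt x ≤ c := by
  rw [← Real.sqrt_sq hc]; exact Real.sqrt_le_sqrt h

set_option maxHeartbeats 1000000 in
theorem stmt_16 (k : ℝ) (hk : k < 2 + Real.sqrt 2) :
    ∃ (A B C D : EuclideanSpace ℝ (Fin 3)) (a₁ a₂ a₃ a₄ a₅ a₆ : ℝ),
      AffineIndependent ℝ ![A, B, C, D] ∧
      a₁ = dist A B ∧ a₂ = dist B C ∧ a₃ = dist C A ∧
      a₄ = dist A D ∧ a₅ = dist D C ∧ a₆ = dist B D ∧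
      faceSum a₁ a₂ a₃ + faceSum a₃ a₄ a₅ + faceSum a₁ a₄ a₆ + faceSum a₂ a₅ a₆ >
        k * (a₁ + a₂ + a₃ + a₄ + a₅ + a₆) := by
  have hs2 : (Real.sqrt 2) ^ 2 = 2 := Real.sq_sqrt (by norm_num)
  have hs2' : (1 : ℝ) ≤ Real.sqrt 2 := le_sqrt_of_sq_le 1 2 zero_le_one (by norm_num)
  have hs2'' : Real.sqrt 2 ≤ 3 / 2 := sqrt_le_of_le_sq 2 (3/2) (by norm_num) (by norm_num)
  set ε : ℝ := min 1 ((2 + Real.sqrt 2 - k) / 20) with hε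
  have hδ : 0 < 2 + Real.sqrt 2 - k := by linarith
  have he : 0 < ε := lt_min one_pos (by positivity)
  have he1 : ε ≤ 1 := min_le_left _ _
  have he2 : ε ≤ (2 + Real.sqrt 2 - k) / 20 := min_le_right _ _
  refine ⟨pt3 0 0 0, pt3 ε 0 0, pt3 0 1 0, pt3 0 1 ε, _, _, _, _, _, _, ?_, rfl, rfl, rfl,
    rfl, rfl, rfl, ?_⟩
  · -- affine independence
    rw [affineIndependent_iff_of_fintype]
    intro w hw hv
    rw [Finset.univ.weightedVSub_eq_linear_combination hw] at hv
    rw [Fin.sum_univ_four] at hv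
    simp only [Matrix.cons_val_zero, Matrix.cons_val_one, Matrix.head_cons,
      Matrix.cons_val_two, Matrix.cons_val_three, Matrix.tail_cons] at hv
    have h0 : (w 0 • pt3 0 0 0 + w 1 • pt3 ε 0 0 + w 2 • pt3 0 1 0 + w 3 • pt3 0 1 ε)
        (0 : Fin 3) = 0 := by rw [hv]; rfl
    have h1 : (w 0 • pt3 0 0 0 + w 1 • pt3 ε 0 0 + w 2 • pt3 0 1 0 + w 3 • pt3 0 1 ε)
        (1 : Fin 3) = 0 := by rw [hv]; rfl
    have h2 : (w 0 • pt3 0 0 0 + w 1 • pt3 ε 0 0 + w 2 • pt3 0 1 0 + w 3 • pt3 0 1 ε)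
        (2 : Fin 3) = 0 := by rw [hv]; rfl
    simp only [pt3, PiLp.add_apply, PiLp.smul_apply, WithLp.equiv_symm_apply, PiLp.toLp_apply,
      Matrix.cons_val_zero, Matrix.cons_val_one, Matrix.head_cons, Matrix.cons_val_two,
      Matrix.tail_cons, smul_eq_mul, mul_zero, mul_one, zero_add, add_zero] at h0 h1 h2
    have hw1 : w 1 = 0 := by
      have := mul_eq_zero.mp (by linarith : w 1 * ε = 0)
      rcases this with h | h
      · exact h
      · exact absurd h (ne_of_gt he)
    have hw3 : w 3 = 0 := by
      have := mul_eq_zero.mp (by linarith : w 3 * ε = 0)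
      rcases this with h | h
      · exact h
      · exact absurd h (ne_of_gt he)
    have hw2 : w 2 = 0 := by linarith
    rw [Fin.sum_univ_four] at hw
    have hw0 : w 0 = 0 := by linarith
    intro i
    fin_cases i <;> assumption
  · -- the inequality
    have d1 : dist (pt3 0 0 0) (pt3 ε 0 0) = ε := by
      rw [dist_pt3]; rw [show (0-ε)^2 + (0-0:ℝ)^2 + (0-0:ℝ)^2 = ε^2 by ring, Real.sqrt_sq he.le]
    have d2 : dist (pt3 ε 0 0) (pt3 0 1 0) = Real.sqrt (1 + ε ^ 2) := by
      rw [dist_pt3]; congr 1; ring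
    have d3 : dist (pt3 0 1 0) (pt3 0 0 0) = 1 := by
      rw [dist_pt3]
      rw [show (0-0:ℝ)^2 + (1-0:ℝ)^2 + (0-0:ℝ)^2 = 1 by ring, Real.sqrt_one]
    have d4 : dist (pt3 0 0 0) (pt3 0 1 ε) = Real.sqrt (1 + ε ^ 2) := by
      rw [dist_pt3]; congr 1; ring
    have d5 : dist (pt3 0 1 ε) (pt3 0 1 0) = ε := by
      rw [dist_pt3]; rw [show (0-0:ℝ)^2 + (1-1:ℝ)^2 + (ε-0)^2 = ε^2 by ring, Real.sqrt_sq he.le]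
    have d6 : dist (pt3 ε 0 0) (pt3 0 1 ε) = Real.sqrt (1 + 2 * ε ^ 2) := by
      rw [dist_pt3]; congr 1; ring
    rw [d1, d2, d3, d4, d5, d6]
    have sq2 : (Real.sqrt (1 + ε ^ 2)) ^ 2 = 1 + ε ^ 2 := Real.sq_sqrt (by positivity)
    have sq6 : (Real.sqrt (1 + 2 * ε ^ 2)) ^ 2 = 1 + 2 * ε ^ 2 := Real.sq_sqrt (by positivity)
    -- upper bounds for the perimeter
    have u2 : Real.sqrt (1 + ε ^ 2) ≤ 1 + ε ^ 2 :=
      sqrt_le_of_le_sq _ _ (by positivity) (by nlinarith)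
    have u6 : Real.sqrt (1 + 2 * ε ^ 2) ≤ 1 + 2 * ε ^ 2 :=
      sqrt_le_of_le_sq _ _ (by positivity) (by nlinarith)
    -- lower bounds for each face sum
    unfold faceSum
    rw [sq2, sq6]
    have L1 : (1:ℝ) ≤ Real.sqrt (ε ^ 2 + (1 + ε ^ 2)) :=
      le_sqrt_of_sq_le _ _ zero_le_one (by rw [one_pow]; nlinarith [sq_nonneg ε])
    have L2 : Real.sqrt 2 ≤ Real.sqrt (1 + ε ^ 2 + 1 ^ 2) :=
      Real.sqrt_le_sqrt (by nlinarith [sq_nonneg ε])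
    have L3 : (1:ℝ) ≤ Real.sqrt (1 ^ 2 + ε ^ 2) :=
      le_sqrt_of_sq_le _ _ zero_le_one (by rw [one_pow]; nlinarith [sq_nonneg ε])
    have L4 : Real.sqrt 2 ≤ Real.sqrt (1 ^ 2 + (1 + ε ^ 2)) :=
      Real.sqrt_le_sqrt (by nlinarith [sq_nonneg ε])
    have L5 : (1:ℝ) ≤ Real.sqrt (1 + ε ^ 2 + ε ^ 2) :=
      le_sqrt_of_sq_le _ _ zero_le_one (by rw [one_pow]; nlinarith [sq_nonneg ε])
    have L6 : (1:ℝ) ≤ Real.sqrt (ε ^ 2 + 1 ^ 2) :=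
      le_sqrt_of_sq_le _ _ zero_le_one (by rw [one_pow]; nlinarith [sq_nonneg ε])
    have L7 : Real.sqrt 2 ≤ Real.sqrt (1 + ε ^ 2 + (1 + 2 * ε ^ 2)) :=
      Real.sqrt_le_sqrt (by nlinarith [sq_nonneg ε])
    have L8 : (1:ℝ) ≤ Real.sqrt (1 + 2 * ε ^ 2 + ε ^ 2) :=
      le_sqrt_of_sq_le _ _ zero_le_one (by rw [one_pow]; nlinarith [sq_nonneg ε])
    have L9 : (1:ℝ) ≤ Real.sqrt (ε ^ 2 + (1 + 2 * ε ^ 2)) :=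
      le_sqrt_of_sq_le _ _ zero_le_one (by rw [one_pow]; nlinarith [sq_nonneg ε])
    have L10 : Real.sqrt 2 ≤ Real.sqrt (1 + 2 * ε ^ 2 + (1 + ε ^ 2)) :=
      Real.sqrt_le_sqrt (by nlinarith [sq_nonneg ε])
    -- now finish
    have hP : ε + Real.sqrt (1 + ε ^ 2) + 1 + Real.sqrt (1 + ε ^ 2) + ε
        + Real.sqrt (1 + 2 * ε ^ 2) ≤ 4 + 2 * ε + 4 * ε ^ 2 := by linarith
    have hP0 : (0:ℝ) ≤ ε + Real.sqrt (1 + ε ^ 2) + 1 + Real.sqrt (1 + ε ^ 2) + ε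
        + Real.sqrt (1 + 2 * ε ^ 2) := by positivity
    have key : k * (ε + Real.sqrt (1 + ε ^ 2) + 1 + Real.sqrt (1 + ε ^ 2) + ε
        + Real.sqrt (1 + 2 * ε ^ 2)) < 8 + 4 * Real.sqrt 2 := by
      rcases le_or_gt k 0 with hk0 | hk0
      · have : k * (ε + Real.sqrt (1 + ε ^ 2) + 1 + Real.sqrt (1 + ε ^ 2) + ε
            + Real.sqrt (1 + 2 * ε ^ 2)) ≤ 0 := mul_nonpos_of_nonpos_of_nonneg hk0 hP0
        linarith
      · have h1 : k * (ε + Real.sqrt (1 + ε ^ 2) + 1 + Real.sqrt (1 + ε ^ 2) + ε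
            + Real.sqrt (1 + 2 * ε ^ 2)) ≤ k * (4 + 2 * ε + 4 * ε ^ 2) :=
          mul_le_mul_of_nonneg_left hP hk0.le
        have h2 : k * (4 + 2 * ε + 4 * ε ^ 2) < 8 + 4 * Real.sqrt 2 := by nlinarith
        linarith
    linarith
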